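/- Let C and D be rigid monoidal categories, let F : C ⥤ D be a (strong) monoidal functor, and let I : D ⥤ C be a left adjoint of F (so I ⊣ F). Then for every object M of D and every object V of C there is an isomorphism in C: I(M) ⊗ V ≅ I(M ⊗ F(V)) (the projection formula). -/

import Mathlib

open CategoryTheory MonoidalCategory

section Aux

open Functor.LaxMonoidal Functor.OplaxMonoidal

noncomputable section
variable {C D : Type*} [Category C] [Category D] [MonoidalCategory C] [MonoidalCategory D]
  (F : C ⥤ D) [F.Monoidal]

/-- A strong monoidal functor sends exact pairings to exact pairings. -/
def exactPairingMap (X Y : C) [ExactPairing X Y] : ExactPairing (F.obj X) (F.obj Y) where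
  coevaluation' := ε F ≫ F.map (η_ X Y) ≫ δ F X Y
  evaluation' := μ F Y X ≫ F.map (ε_ X Y) ≫ η F
  coevaluation_evaluation' := by
    have h1 : F.obj Y ◁ δ F X Y ≫ (α_ _ _ _).inv ≫ μ F Y X ▷ F.obj Y
        = μ F Y (X ⊗ Y) ≫ F.map (α_ Y X Y).inv ≫ δ F (Y ⊗ X) Y := by
      rw [← Functor.Monoidal.μ_δ_assoc F Y (X ⊗ Y)
        (F.obj Y ◁ δ F X Y ≫ (α_ _ _ _).inv ≫ μ F Y X ▷ F.obj Y),
        Functor.OplaxMonoidal.associativity_inv_assoc]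
      simp
    simp only [MonoidalCategory.whiskerLeft_comp, comp_whiskerRight, Category.assoc,
      Functor.LaxMonoidal.right_unitality, Functor.OplaxMonoidal.left_unitality]
    slice_lhs 3 5 => rw [h1]
    simp only [Category.assoc]
    slice_lhs 2 3 => rw [μ_natural_right]
    slice_lhs 5 6 => rw [δ_natural_left]
    slice_lhs 3 5 => rw [← F.map_comp, ← F.map_comp, ExactPairing.coevaluation_evaluation]
    simp [F.map_comp]
  evaluation_coevaluation' := by
    have h1 : δ F X Y ▷ F.obj X ≫ (α_ _ _ _).hom ≫ F.obj X ◁ μ F Y X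
        = μ F (X ⊗ Y) X ≫ F.map (α_ X Y X).hom ≫ δ F X (Y ⊗ X) := by
      rw [← Functor.Monoidal.μ_δ_assoc F (X ⊗ Y) X
        (δ F X Y ▷ F.obj X ≫ (α_ _ _ _).hom ≫ F.obj X ◁ μ F Y X),
        Functor.OplaxMonoidal.associativity_assoc]
      simp
    simp only [MonoidalCategory.whiskerLeft_comp, comp_whiskerRight, Category.assoc,
      Functor.LaxMonoidal.left_unitality, Functor.OplaxMonoidal.right_unitality]
    slice_lhs 3 5 => rw [h1]
    simp only [Category.assoc]
    slice_lhs 2 3 => rw [μ_natural_left]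
    slice_lhs 5 6 => rw [δ_natural_right]
    slice_lhs 3 5 => rw [← F.map_comp, ← F.map_comp, ExactPairing.evaluation_coevaluation]
    simp [F.map_comp]

end
end Aux

/-- The projection formula: if `C, D` are rigid monoidal categories, `F : C ⥤ D` is a strong
monoidal functor and `I : D ⥤ C` is a left adjoint of `F`, then for every object `M` of `D` and
every object `V` of `C` there is an isomorphism `I M ⊗ V ≅ I (M ⊗ F V)` in `C`. -/
theorem projection_formula
    {C D : Type*} [Category C] [Category D]
    [MonoidalCategory C] [MonoidalCategory D]
    [RigidCategory C] [RigidCategory D]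
    (F : C ⥤ D) [F.Monoidal] (I : D ⥤ C) (adj : I ⊣ F)
    (M : D) (V : C) :
    Nonempty (I.obj M ⊗ V ≅ I.obj (M ⊗ F.obj V)) := by
  letI : ExactPairing (F.obj V) (F.obj Vᘁ) := exactPairingMap F V Vᘁ
  let adj1 : I ⋙ tensorRight V ⊣ tensorRight Vᘁ ⋙ F :=
    adj.comp (tensorRightAdjunction V Vᘁ)
  let adj2 : tensorRight (F.obj V) ⋙ I ⊣ tensorRight Vᘁ ⋙ F :=
    ((tensorRightAdjunction (F.obj V) (F.obj Vᘁ)).comp adj).ofNatIsoRight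
      (Functor.Monoidal.commTensorRight F Vᘁ)
  exact ⟨(adj1.leftAdjointUniq adj2).app M⟩
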